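/- Let C be an idempotent complete (Karoubian) triangulated category equipped with a weight structure w, let m ∈ ℤ, and let X →c M →p Y →δ X[1] be an m-weight decomposition of an object M. Suppose h : X → X and j : Y → Y are morphisms such that (h, id_M, j) is a morphism of distinguished triangles from this triangle to itself, and h is idempotent (h ∘ h = h). Then X splits as a direct sum X ≅ M_1 ⊕ M_0 such that h corresponds to the projection onto M_1, the object M_0 belongs to C_{w=m}, and the given distinguished triangle is isomorphic to the direct sum of a distinguished triangle M_1 → M → M_2 → M_1[1] which is an m-weight decomposition of M and the distinguished triangle M_0 → 0 → M_0[1] → M_0[1]. -/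

import Mathlib

open CategoryTheory CategoryTheory.Limits CategoryTheory.Pretriangulated ZeroObject

universe v u

variable (C : Type u) [Category.{v} C] [HasZeroObject C] [Preadditive C] [HasShift C ℤ]
  [∀ n : ℤ, (shiftFunctor C n).Additive] [Pretriangulated C]

/-- A weight structure on a triangulated category `C`: a pair of retract-closed classes
`le = C_{w≤0}` and `ge = C_{w≥0}` satisfying semi-invariance with respect to translations,
orthogonality, and the existence of weight decompositions. -/
structure WeightStructure where
  /-- the class `C_{w≤0}` -/
  le : Set C
  /-- the class `C_{w≥0}` -/
  ge : Set C
  /-- `C_{w≤0}` is closed under retracts -/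
  le_retract : ∀ ⦃X Y : C⦄ (i : X ⟶ Y) (r : Y ⟶ X), i ≫ r = 𝟙 X → le Y → le X
  /-- `C_{w≥0}` is closed under retracts -/
  ge_retract : ∀ ⦃X Y : C⦄ (i : X ⟶ Y) (r : Y ⟶ X), i ≫ r = 𝟙 X → ge Y → ge X
  /-- `C_{w≤0} ⊆ C_{w≤0}[1]`, i.e. `X ∈ C_{w≤0} → X[-1] ∈ C_{w≤0}` -/
  le_shift : ∀ ⦃X : C⦄, le X → le ((shiftFunctor C (-1 : ℤ)).obj X)
  /-- `C_{w≥0}[1] ⊆ C_{w≥0}`, i.e. `X ∈ C_{w≥0} → X[1] ∈ C_{w≥0}` -/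
  ge_shift : ∀ ⦃X : C⦄, ge X → ge ((shiftFunctor C (1 : ℤ)).obj X)
  /-- orthogonality: `Hom(X, Y[1]) = 0` for `X ∈ C_{w≤0}`, `Y ∈ C_{w≥0}` -/
  orth : ∀ ⦃X Y : C⦄, le X → ge Y → ∀ f : X ⟶ (shiftFunctor C (1 : ℤ)).obj Y, f = 0
  /-- existence of weight decompositions -/
  decomp : ∀ M : C, ∃ (X Y : C) (f : X ⟶ M) (g : M ⟶ Y)
      (h : Y ⟶ (shiftFunctor C (1 : ℤ)).obj X),
      Triangle.mk f g h ∈ (distTriang C) ∧ le X ∧ ge ((shiftFunctor C (-1 : ℤ)).obj Y)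

variable {C}

namespace WeightStructure

/-- `X ∈ C_{w≤i} = C_{w≤0}[i]`, i.e. `X[-i] ∈ C_{w≤0}`. -/
def leDeg (w : WeightStructure C) (i : ℤ) (X : C) : Prop :=
  w.le ((shiftFunctor C (-i)).obj X)

/-- `X ∈ C_{w≥i} = C_{w≥0}[i]`, i.e. `X[-i] ∈ C_{w≥0}`. -/
def geDeg (w : WeightStructure C) (i : ℤ) (X : C) : Prop :=
  w.ge ((shiftFunctor C (-i)).obj X)

/-- The triangle `A → M → B → A[1]` is an `m`-weight decomposition of `M`:
it is distinguished, `A ∈ C_{w≤m}` and `B ∈ C_{w≥m+1}`. -/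
def IsWeightDecomp (w : WeightStructure C) (m : ℤ) {A M B : C}
    (f : A ⟶ M) (g : M ⟶ B) (h : B ⟶ (shiftFunctor C (1 : ℤ)).obj A) : Prop :=
  Triangle.mk f g h ∈ (distTriang C) ∧ w.leDeg m A ∧ w.geDeg (m + 1) B

/-- `g : M ⟶ N` kills weights `m,…,n`: there exist an `n`-weight decomposition of `M` and an
`(m-1)`-weight decomposition of `N` such that the composite `w_{≤n}M → M → N → w_{≥m}N` is `0`. -/
def KillsWeights (w : WeightStructure C) (m n : ℤ) {M N : C} (g : M ⟶ N) : Prop :=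
  ∃ (A B A' B' : C) (f : A ⟶ M) (p : M ⟶ B) (δ : B ⟶ (shiftFunctor C (1 : ℤ)).obj A)
    (f' : A' ⟶ N) (p' : N ⟶ B') (δ' : B' ⟶ (shiftFunctor C (1 : ℤ)).obj A'),
    w.IsWeightDecomp n f p δ ∧ w.IsWeightDecomp (m - 1) f' p' δ' ∧ f ≫ g ≫ p' = 0

/-- `M` is without weights `m,…,n` if `𝟙 M` kills weights `m,…,n`. -/
def WithoutWeights (w : WeightStructure C) (m n : ℤ) (M : C) : Prop :=
  w.KillsWeights m n (𝟙 M)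

end WeightStructure

open CategoryTheory.Category CategoryTheory.Preadditive

section Aux

open WalkingPair in
/-- The binary direct sum of two distinguished triangles is distinguished. -/
lemma binaryBiprodTriangle_distinguished [HasBinaryBiproducts C] (TA TB : Triangle C)
    (hA : TA ∈ distTriang C) (hB : TB ∈ distTriang C) :
    Triangle.mk (biprod.map TA.mor₁ TB.mor₁) (biprod.map TA.mor₂ TB.mor₂)
      (biprod.desc (TA.mor₃ ≫ (shiftFunctor C (1 : ℤ)).map biprod.inl)
        (TB.mor₃ ≫ (shiftFunctor C (1 : ℤ)).map biprod.inr)) ∈ distTriang C := by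
  let T : WalkingPair → Triangle C := fun j => WalkingPair.casesOn j TA TB
  have hT : ∀ j, T j ∈ distTriang C := by rintro (_ | _) <;> assumption
  let Tsum : Triangle C := Triangle.mk (biprod.map TA.mor₁ TB.mor₁) (biprod.map TA.mor₂ TB.mor₂)
      (biprod.desc (TA.mor₃ ≫ (shiftFunctor C (1 : ℤ)).map biprod.inl)
        (TB.mor₃ ≫ (shiftFunctor C (1 : ℤ)).map biprod.inr))
  let projA : Tsum ⟶ TA :=
    { hom₁ := biprod.fst
      hom₂ := biprod.fst
      hom₃ := biprod.fst
      comm₁ := by simp [Tsum, Triangle.mk]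
      comm₂ := by simp [Tsum, Triangle.mk]
      comm₃ := by
        apply biprod.hom_ext' <;>
          simp [Tsum, Triangle.mk, ← Functor.map_comp] }
  let projB : Tsum ⟶ TB :=
    { hom₁ := biprod.snd
      hom₂ := biprod.snd
      hom₃ := biprod.snd
      comm₁ := by simp [Tsum, Triangle.mk]
      comm₂ := by simp [Tsum, Triangle.mk]
      comm₃ := by
        apply biprod.hom_ext' <;>
          simp [Tsum, Triangle.mk, ← Functor.map_comp] }
  let proj : ∀ j, Tsum ⟶ T j := fun j => WalkingPair.casesOn j projA projB
  let φ : Tsum ⟶ productTriangle T := productTriangle.lift T proj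
  have hiso : ∀ (g : WalkingPair → C) (u : ∀ j, (g left ⊞ g right) ⟶ g j),
      u left = biprod.fst → u right = biprod.snd → IsIso (Pi.lift u) := by
    intro g u h₁ h₂
    refine ⟨biprod.lift (Pi.π g left) (Pi.π g right), ?_, ?_⟩
    · apply biprod.hom_ext <;> simp [h₁, h₂]
    · apply limit.hom_ext
      rintro ⟨(_ | _)⟩ <;> simp [h₁, h₂]
  have h₁ : IsIso φ.hom₁ := by
    have := hiso (fun j => (T j).obj₁) (fun j => (proj j).hom₁) rfl rfl
    exact this
  have h₂ : IsIso φ.hom₂ := by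
    have := hiso (fun j => (T j).obj₂) (fun j => (proj j).hom₂) rfl rfl
    exact this
  have h₃ : IsIso φ.hom₃ := by
    have := hiso (fun j => (T j).obj₃) (fun j => (proj j).hom₃) rfl rfl
    exact this
  have : IsIso φ := by
    apply Triangle.isIso_of_isIsos
    all_goals assumption
  exact isomorphic_distinguished _ (productTriangle_distinguished T hT) _ (asIso φ)

end Aux

/-- Proposition 1.2.1(6): in a Karoubian triangulated category, if `(h, 𝟙 M, j)` is an
endomorphism of an `m`-weight decomposition `X → M → Y → X[1]` with `h` idempotent, then `X`
splits as `M₁ ⊞ M₀` with `h` the projection onto `M₁`, `M₀ ∈ C_{w=m}`, and the given triangle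
is isomorphic to the direct sum of an `m`-weight decomposition `M₁ → M → M₂ → M₁[1]` of `M`
and the distinguished triangle `M₀ → 0 → M₀[1] → M₀[1]`. -/
theorem weightDecomp_idempotent_splits [IsIdempotentComplete C] [HasBinaryBiproducts C]
    (w : WeightStructure C) (m : ℤ) {X M Y : C}
    (c : X ⟶ M) (p : M ⟶ Y) (δ : Y ⟶ (shiftFunctor C (1 : ℤ)).obj X)
    (hd : w.IsWeightDecomp m c p δ)
    (h : X ⟶ X) (j : Y ⟶ Y)
    (hsq₁ : c ≫ 𝟙 M = h ≫ c) (hsq₂ : p ≫ j = 𝟙 M ≫ p)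
    (hsq₃ : δ ≫ (shiftFunctor C (1 : ℤ)).map h = j ≫ δ)
    (hidem : h ≫ h = h) :
    ∃ (M₁ M₀ M₂ : C) (e : X ≅ M₁ ⊞ M₀) (f₁ : M₁ ⟶ M) (p₁ : M ⟶ M₂)
      (δ₁ : M₂ ⟶ (shiftFunctor C (1 : ℤ)).obj M₁),
      h = e.hom ≫ biprod.fst ≫ biprod.inl ≫ e.inv ∧
      w.leDeg m M₀ ∧ w.geDeg m M₀ ∧
      w.IsWeightDecomp m f₁ p₁ δ₁ ∧
      Nonempty (Triangle.mk c p δ ≅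
        Triangle.mk (biprod.map f₁ (0 : M₀ ⟶ (0 : C)))
          (biprod.map p₁ (0 : (0 : C) ⟶ (shiftFunctor C (1 : ℤ)).obj M₀))
          (biprod.desc (δ₁ ≫ (shiftFunctor C (1 : ℤ)).map biprod.inl)
            ((shiftFunctor C (1 : ℤ)).map biprod.inr))) := by
  obtain ⟨hdist, hle, hge⟩ := hd
  have hc : c = h ≫ c := by simpa using hsq₁
  -- split the idempotents h and 𝟙 - h
  obtain ⟨M₁, i₁, r₁, hir₁, hri₁⟩ := IsIdempotentComplete.idempotents_split X h hidem
  have hidem' : (𝟙 X - h) ≫ (𝟙 X - h) = 𝟙 X - h := by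
    simp [comp_sub, sub_comp, hidem]
  obtain ⟨M₀, i₀, r₀, hir₀, hri₀⟩ := IsIdempotentComplete.idempotents_split X (𝟙 X - h) hidem'
  have hi₁h : i₁ ≫ h = i₁ := by rw [← hri₁, ← assoc, hir₁, id_comp]
  have hi₀h : i₀ ≫ h = 0 := by
    have ha : i₀ ≫ (𝟙 X - h) = i₀ := by rw [← hri₀, ← assoc, hir₀, id_comp]
    rw [comp_sub, comp_id, sub_eq_self] at ha
    exact ha
  have hi₁r₀ : i₁ ≫ r₀ = 0 := by
    haveI : IsSplitMono i₀ := ⟨⟨⟨r₀, hir₀⟩⟩⟩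
    have ha : (i₁ ≫ r₀) ≫ i₀ = 0 ≫ i₀ := by
      rw [assoc, hri₀, zero_comp, comp_sub, comp_id, hi₁h, sub_self]
    exact (cancel_mono i₀).1 ha
  have hi₀r₁ : i₀ ≫ r₁ = 0 := by
    haveI : IsSplitMono i₁ := ⟨⟨⟨r₁, hir₁⟩⟩⟩
    have ha : (i₀ ≫ r₁) ≫ i₁ = 0 ≫ i₁ := by rw [assoc, hri₁, zero_comp, hi₀h]
    exact (cancel_mono i₁).1 ha
  -- the splitting isomorphism
  let e : X ≅ M₁ ⊞ M₀ :=
    { hom := biprod.lift r₁ r₀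
      inv := biprod.desc i₁ i₀
      hom_inv_id := by rw [biprod.lift_desc, hri₁, hri₀]; abel
      inv_hom_id := by
        apply biprod.hom_ext' <;> apply biprod.hom_ext <;>
          simp [hir₀, hir₁, hi₁r₀, hi₀r₁] }
  have hc₀ : i₀ ≫ c = 0 := by rw [hc, ← assoc, hi₀h, zero_comp]
  -- the weight decomposition of M
  obtain ⟨M₂, p₁, δ₁, hTA⟩ := Pretriangulated.distinguished_cocone_triangle (i₁ ≫ c)
  have hT : Triangle.mk c p δ ∈ distTriang C := hdist
  have hT₀ : Triangle.mk (0 : M₀ ⟶ (0 : C)) 0 (𝟙 (M₀⟦(1 : ℤ)⟧)) ∈ distTriang C :=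
    contractible_distinguished₂ M₀
  -- the direct sum triangle is distinguished
  have hTsum : Triangle.mk (biprod.map (i₁ ≫ c) (0 : M₀ ⟶ (0 : C)))
      (biprod.map p₁ (0 : (0 : C) ⟶ (shiftFunctor C (1 : ℤ)).obj M₀))
      (biprod.desc (δ₁ ≫ (shiftFunctor C (1 : ℤ)).map biprod.inl)
        ((shiftFunctor C (1 : ℤ)).map biprod.inr)) ∈ distTriang C := by
    have := binaryBiprodTriangle_distinguished _ _ hTA hT₀
    dsimp only [Triangle.mk] at this
    simp only [Category.id_comp] at this
    exact this
  -- complete the comparison squares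
  obtain ⟨u, hu₁, hu₂⟩ := Pretriangulated.complete_distinguished_triangle_morphism _ _
    hTA hT i₁ (𝟙 M) (by simp [Triangle.mk])
  obtain ⟨ξ, hξ₁, hξ₂⟩ := Pretriangulated.complete_distinguished_triangle_morphism _ _
    hT₀ hT i₀ 0 (by show (0 : M₀ ⟶ (0 : C)) ≫ (0 : (0 : C) ⟶ M) = i₀ ≫ c; rw [zero_comp, hc₀])
  change M₂ ⟶ Y at u
  change (shiftFunctor C (1 : ℤ)).obj M₀ ⟶ Y at ξ
  have hu₁' : p₁ ≫ u = p := hu₁.trans (Category.id_comp _)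
  have hu₂' : δ₁ ≫ (shiftFunctor C (1 : ℤ)).map i₁ = u ≫ δ := hu₂
  have hξ₂' : (shiftFunctor C (1 : ℤ)).map i₀ = ξ ≫ δ := (Category.id_comp _).symm.trans hξ₂
  -- the comparison morphism of triangles
  let Φ : Triangle.mk (biprod.map (i₁ ≫ c) (0 : M₀ ⟶ (0 : C)))
      (biprod.map p₁ (0 : (0 : C) ⟶ (shiftFunctor C (1 : ℤ)).obj M₀))
      (biprod.desc (δ₁ ≫ (shiftFunctor C (1 : ℤ)).map biprod.inl)
        ((shiftFunctor C (1 : ℤ)).map biprod.inr)) ⟶ Triangle.mk c p δ :=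
    { hom₁ := (biprod.desc i₁ i₀ : M₁ ⊞ M₀ ⟶ X)
      hom₂ := (biprod.desc (𝟙 M) 0 : M ⊞ (0 : C) ⟶ M)
      hom₃ := (biprod.desc u ξ : M₂ ⊞ (shiftFunctor C (1 : ℤ)).obj M₀ ⟶ Y)
      comm₁ := by
        dsimp only [Triangle.mk]; apply biprod.hom_ext' <;> simp [hc₀]
      comm₂ := by
        dsimp only [Triangle.mk]; apply biprod.hom_ext' <;> simp [hu₁']
      comm₃ := by
        dsimp only [Triangle.mk]; apply biprod.hom_ext' <;>
          simp [← Functor.map_comp, hu₂', hξ₂'] }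
  haveI h₁iso : IsIso Φ.hom₁ := ⟨biprod.lift r₁ r₀, e.inv_hom_id, e.hom_inv_id⟩
  haveI h₂iso : IsIso Φ.hom₂ := by
    show IsIso (biprod.desc (𝟙 M) (0 : (0 : C) ⟶ M))
    refine ⟨biprod.inl, ?_, by simp⟩
    apply biprod.hom_ext'
    · simp
    · apply (isZero_zero C).eq_of_src
  haveI h₃iso : IsIso Φ.hom₃ := isIso₃_of_isIso₁₂ Φ hTsum hT h₁iso h₂iso
  haveI : IsIso Φ := by
    apply Triangle.isIso_of_isIsos
    all_goals assumption
  -- membership statements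
  have retract_le : ∀ {A B : C} (i : A ⟶ B) (r : B ⟶ A), i ≫ r = 𝟙 A →
      w.leDeg m B → w.leDeg m A := by
    intro A B i r hir hB
    exact w.le_retract ((shiftFunctor C (-m)).map i) ((shiftFunctor C (-m)).map r)
      (by rw [← CategoryTheory.Functor.map_comp, hir, CategoryTheory.Functor.map_id]) hB
  have retract_ge : ∀ (k : ℤ) {A B : C} (i : A ⟶ B) (r : B ⟶ A), i ≫ r = 𝟙 A →
      w.geDeg k B → w.geDeg k A := by
    intro k A B i r hir hB
    exact w.ge_retract ((shiftFunctor C (-k)).map i) ((shiftFunctor C (-k)).map r)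
      (by rw [← CategoryTheory.Functor.map_comp, hir, CategoryTheory.Functor.map_id]) hB
  have hleM₁ : w.leDeg m M₁ := retract_le i₁ r₁ hir₁ hle
  have hleM₀ : w.leDeg m M₀ := retract_le i₀ r₀ hir₀ hle
  have hgeM₂ : w.geDeg (m + 1) M₂ := by
    refine retract_ge (m + 1) (biprod.inl ≫ Φ.hom₃) (inv Φ.hom₃ ≫ biprod.fst) ?_ hge
    erw [assoc, IsIso.hom_inv_id_assoc, biprod.inl_fst]
  have hgeM₀shift : w.geDeg (m + 1) (M₀⟦(1 : ℤ)⟧) := by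
    refine retract_ge (m + 1) (biprod.inr ≫ Φ.hom₃) (inv Φ.hom₃ ≫ biprod.snd) ?_ hge
    erw [assoc, IsIso.hom_inv_id_assoc, biprod.inr_snd]
  have hgeM₀ : w.geDeg m M₀ := by
    have α := (shiftFunctorAdd' C (1 : ℤ) (-(m + 1)) (-m) (by omega)).app M₀
    exact w.ge_retract α.hom α.inv α.hom_inv_id hgeM₀shift
  refine ⟨M₁, M₀, M₂, e, i₁ ≫ c, p₁, δ₁, ?_, hleM₀, hgeM₀, ⟨hTA, hleM₁, hgeM₂⟩,
    ⟨(asIso Φ).symm⟩⟩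
  simp [e, hri₁]
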